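/- For every integer n ≥ 3, the number ℓ_n of primes p with z(p) = n satisfies ℓ_n < n·log α / log n, where α = 1 + √2. -/

import Mathlib

/-- The Pell sequence: `P 0 = 0`, `P 1 = 1`, `P (n+2) = 2 * P (n+1) + P n`. -/
def pell : ℕ → ℕ
  | 0 => 0
  | 1 => 1
  | n + 2 => 2 * pell (n + 1) + pell n

/-- The order of appearance of `n` in the Pell sequence: the smallest positive
integer `k` such that `n ∣ P k`. -/
noncomputable def zAppear (n : ℕ) : ℕ := sInf {k : ℕ | 0 < k ∧ n ∣ pell k}

lemma pell_id {R : Type*} [CommRing R] (s : R) (hs : s ^ 2 = 2) (k : ℕ) :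
    (1 + s) ^ k - (1 - s) ^ k = (pell k : R) * (2 * s) := by
  induction k using Nat.twoStepInduction with
  | zero => simp [pell]
  | one => simp [pell]; ring
  | more k ih1 ih2 =>
    have ha : (1 + s) ^ (k + 2) = 2 * (1 + s) ^ (k + 1) + (1 + s) ^ k := by
      have h : (1 + s) ^ (k + 2) = (1 + s) ^ k * ((1 + s) * (1 + s)) := by ring
      have h2 : (1 + s) * (1 + s) = 2 * (1 + s) + 1 := by linear_combination hs
      rw [h, h2]; ring
    have hb : (1 - s) ^ (k + 2) = 2 * (1 - s) ^ (k + 1) + (1 - s) ^ k := by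
      have h : (1 - s) ^ (k + 2) = (1 - s) ^ k * ((1 - s) * (1 - s)) := by ring
      have h2 : (1 - s) * (1 - s) = 2 * (1 - s) + 1 := by linear_combination hs
      rw [h, h2]; ring
    have hc : pell (k + 2) = 2 * pell (k + 1) + pell k := rfl
    rw [ha, hb, hc]
    push_cast
    linear_combination 2 * ih2 + ih1

open Polynomial in
lemma pell_dvd_pred_or_succ (p : ℕ) (hp : p.Prime) (hp2 : p ≠ 2) :
    p ∣ pell (p - 1) ∨ p ∣ pell (p + 1) := by
  haveI : Fact p.Prime := ⟨hp⟩
  obtain ⟨m, hm⟩ := hp.odd_of_ne_two hp2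
  set f : (ZMod p)[X] := X ^ 2 - C 2 with hf
  have hdeg : f.degree = 2 := by rw [hf]; compute_degree!
  haveI : Nontrivial (AdjoinRoot f) := AdjoinRoot.nontrivial f (by rw [hdeg]; norm_num)
  set R := AdjoinRoot f
  set c : ZMod p →+* R := algebraMap (ZMod p) R with hc
  have hcinj : Function.Injective c := c.injective
  haveI : CharP R p := charP_of_injective_ringHom hcinj p
  set s : R := AdjoinRoot.root f with hsdef
  have hs : s ^ 2 = 2 := by
    have := AdjoinRoot.eval₂_root f
    simp [hf, eval₂_sub, eval₂_pow, eval₂_X, eval₂_C, sub_eq_zero] at this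
    exact this.trans (map_ofNat (AdjoinRoot.of f) 2)
  have hc2 : c 2 = 2 := map_ofNat c 2
  have h2ne : (2 : ZMod p) ≠ 0 := by
    have : ((2 : ℕ) : ZMod p) ≠ 0 := by
      rw [Ne, ZMod.natCast_eq_zero_iff]
      intro h
      exact hp2 ((Nat.prime_dvd_prime_iff_eq hp Nat.prime_two).mp h)
    push_cast at this; exact this
  set e : ZMod p := 2 ^ m with he
  have he2 : e ^ 2 = 1 := by
    rw [he, ← pow_mul]
    have : m * 2 = p - 1 := by omega
    rw [this]
    exact ZMod.pow_card_sub_one_eq_one h2ne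
  have hepm : e = 1 ∨ e = -1 := by
    have h : (e - 1) * (e + 1) = 0 := by linear_combination he2
    rcases mul_eq_zero.mp h with h | h
    · left; exact sub_eq_zero.mp h
    · right; linear_combination h
  have hsp : s ^ p = c e * s := by
    have h1 : s ^ p = (s ^ 2) ^ m * s := by
      rw [← pow_mul, ← pow_succ]
      congr 1
    rw [h1, hs, he, map_pow, hc2]
  have hap : (1 + s) ^ p = 1 + c e * s := by
    rw [add_pow_char, one_pow, hsp]
  have hbp : (1 - s) ^ p = 1 - c e * s := by
    have h1 : (1 : R) - s = 1 + (-s) := by ring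
    rw [h1, add_pow_char, one_pow, Odd.neg_pow ⟨m, hm⟩, hsp]; ring
  have hab : (1 + s) * (1 - s) = -1 := by linear_combination -hs
  have h2s : IsUnit (2 * s) := by
    have h8 : (2 * s) * (2 * s) = c 8 := by
      have h : c 8 = 8 := map_ofNat c 8
      rw [h]; linear_combination (4:R) * hs
    have hu8 : IsUnit (c 8) := by
      apply IsUnit.map
      apply Ne.isUnit
      intro h
      have h' : ((8 : ℕ) : ZMod p) = 0 := by push_cast; exact h
      rw [ZMod.natCast_eq_zero_iff] at h'
      rw [show (8:ℕ) = 2^3 by norm_num] at h'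
      exact hp2 ((Nat.prime_dvd_prime_iff_eq hp Nat.prime_two).mp (hp.dvd_of_dvd_pow h'))
    exact isUnit_of_mul_isUnit_left (h8 ▸ hu8)
  have key : ∀ k : ℕ, ((pell k : R) = 0) → p ∣ pell k := by
    intro k hk
    have h : c ((pell k : ZMod p)) = 0 := by rwa [map_natCast]
    have h0 : ((pell k : ZMod p)) = 0 := hcinj (by simpa using h)
    exact (ZMod.natCast_eq_zero_iff _ _).mp h0
  rcases hepm with h1 | h1
  · left
    have ha : (1 + s) ^ p = 1 + s := by rw [hap, h1, map_one, one_mul]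
    have hb : (1 - s) ^ p = 1 - s := by rw [hbp, h1, map_one, one_mul]
    have hua : IsUnit (1 + s) := IsUnit.of_mul_eq_one (-(1 - s)) (by linear_combination -hab)
    have hub : IsUnit (1 - s) := IsUnit.of_mul_eq_one (-(1 + s)) (by linear_combination -hab)
    have hpp : p - 1 + 1 = p := Nat.succ_pred_eq_of_pos hp.pos
    have ha' : (1 + s) ^ (p - 1) = 1 := by
      have h : (1 + s) ^ (p - 1) * (1 + s) = 1 * (1 + s) := by
        rw [one_mul, ← pow_succ, hpp, ha]
      exact hua.mul_right_cancel h
    have hb' : (1 - s) ^ (p - 1) = 1 := by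
      have h : (1 - s) ^ (p - 1) * (1 - s) = 1 * (1 - s) := by
        rw [one_mul, ← pow_succ, hpp, hb]
      exact hub.mul_right_cancel h
    have hz : (pell (p - 1) : R) * (2 * s) = 0 := by
      rw [← pell_id s hs, ha', hb', sub_self]
    exact key _ ((h2s.mul_right_eq_zero).mp (by rwa [mul_comm] at hz))
  · right
    have ha : (1 + s) ^ p = 1 - s := by rw [hap, h1, map_neg, map_one]; ring
    have hb : (1 - s) ^ p = 1 + s := by rw [hbp, h1, map_neg, map_one]; ring
    have ha' : (1 + s) ^ (p + 1) = -1 := by rw [pow_succ, ha]; linear_combination hab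
    have hb' : (1 - s) ^ (p + 1) = -1 := by rw [pow_succ, hb]; linear_combination hab
    have hz : (pell (p + 1) : R) * (2 * s) = 0 := by
      rw [← pell_id s hs, ha', hb', sub_self]
    exact key _ ((h2s.mul_right_eq_zero).mp (by rwa [mul_comm] at hz))

lemma pell_pos : ∀ n : ℕ, 0 < pell (n + 1)
  | 0 => one_pos
  | 1 => by norm_num [pell]
  | n + 2 => by
    have h : 0 < pell (n + 2) := pell_pos (n + 1)
    show 0 < 2 * pell (n + 2) + pell (n + 1)
    omega

lemma pell_le_alpha (n : ℕ) : (pell (n + 1) : ℝ) ≤ (1 + Real.sqrt 2) ^ n := by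
  set a : ℝ := 1 + Real.sqrt 2 with ha
  have hs2 : Real.sqrt 2 ^ 2 = 2 := Real.sq_sqrt (by norm_num)
  have hs2pos : 0 < Real.sqrt 2 := Real.sqrt_pos.mpr (by norm_num)
  have hsq : a ^ 2 = 2 * a + 1 := by rw [ha]; nlinarith [hs2]
  have ha1 : (1:ℝ) ≤ a := by nlinarith
  have key : ∀ n : ℕ, (pell (n + 1) : ℝ) ≤ a ^ n ∧ (pell (n + 2) : ℝ) ≤ a ^ (n + 1) := by
    intro n
    induction n with
    | zero =>
      constructor
      · norm_num [pell]
      · show ((2 * pell 1 + pell 0 : ℕ) : ℝ) ≤ a ^ 1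
        norm_num [pell]; nlinarith
    | succ n ih =>
      refine ⟨ih.2, ?_⟩
      show ((2 * pell (n + 2) + pell (n + 1) : ℕ) : ℝ) ≤ a ^ (n + 2)
      push_cast
      have h3 : a ^ (n + 2) = 2 * a ^ (n + 1) + a ^ n := by
        rw [show a ^ (n + 2) = a ^ n * a ^ 2 by ring, hsq]; ring
      linarith [ih.1, ih.2]
  exact (key n).1

/-- For every integer `n ≥ 3`, the number `ℓ_n` of primes `p` with `z p = n`
satisfies `ℓ_n < n log α / log n`, where `α = 1 + √2`. -/
theorem card_primes_zAppear_eq_lt (n : ℕ) (hn : 3 ≤ n) :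
    ((({p : ℕ | p.Prime ∧ zAppear p = n}).ncard : ℝ)) <
      (n : ℝ) * Real.log (1 + Real.sqrt 2) / Real.log n := by
  set S := {p : ℕ | p.Prime ∧ zAppear p = n} with hS
  set a : ℝ := 1 + Real.sqrt 2 with ha
  have hs2pos : 0 < Real.sqrt 2 := Real.sqrt_pos.mpr (by norm_num)
  have ha1 : (1:ℝ) < a := by rw [ha]; nlinarith
  have hlogn : 0 < Real.log n := Real.log_pos (by exact_mod_cast by omega)
  have hloga : 0 < Real.log a := Real.log_pos ha1
  -- key properties of members of S
  have key : ∀ p ∈ S, p.Prime ∧ p ∣ pell n ∧ n - 1 ≤ p := by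
    intro p hp
    obtain ⟨hpp, hz⟩ := hp
    have hp2 : p ≠ 2 := by
      intro h
      subst h
      have h2 : zAppear 2 ≤ 2 := Nat.sInf_le ⟨by norm_num, by norm_num [pell]⟩
      omega
    obtain ⟨k, hk0, hkle, hdvd⟩ :
        ∃ k, 0 < k ∧ k ≤ p + 1 ∧ p ∣ pell k := by
      rcases pell_dvd_pred_or_succ p hpp hp2 with h | h
      · exact ⟨p - 1, by have := hpp.two_le; omega, by omega, h⟩
      · exact ⟨p + 1, by omega, le_refl _, h⟩
    have hle : zAppear p ≤ k := Nat.sInf_le ⟨hk0, hdvd⟩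
    have hmem : zAppear p ∈ {k : ℕ | 0 < k ∧ p ∣ pell k} :=
      Nat.sInf_mem ⟨k, hk0, hdvd⟩
    rw [hz] at hmem hle
    exact ⟨hpp, hmem.2, by omega⟩
  have hpelln : 0 < pell n := by
    have := pell_pos (n - 1)
    have hn1 : n - 1 + 1 = n := by omega
    rwa [hn1] at this
  have hfin : S.Finite := by
    apply (Set.finite_le_nat (pell n)).subset
    intro p hp
    exact Nat.le_of_dvd hpelln (key p hp).2.1
  set T := hfin.toFinset with hT
  have hTS : ∀ p, p ∈ T ↔ p ∈ S := fun p => hfin.mem_toFinset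
  have hcard : S.ncard = T.card := Set.ncard_eq_toFinset_card S hfin
  rcases Nat.eq_zero_or_pos T.card with h0 | hpos
  · rw [hcard, h0]
    norm_num
    exact div_pos (mul_pos (by exact_mod_cast by omega : (0:ℝ) < n) hloga) hlogn
  · set l := T.card with hl
    have hprod_dvd : (∏ p ∈ T, p) ∣ pell n :=
      Finset.prod_primes_dvd _ (fun p hp => ((key p ((hTS p).mp hp)).1).prime)
        (fun p hp => (key p ((hTS p).mp hp)).2.1)
    have hprodle : (∏ p ∈ T, p) ≤ pell n := Nat.le_of_dvd hpelln hprod_dvd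
    have hstep : ∀ U : Finset ℕ, (∀ p ∈ U, n ≤ p) → n ^ U.card ≤ ∏ p ∈ U, p := by
      intro U hU
      calc n ^ U.card = ∏ _p ∈ U, n := (Finset.prod_const n).symm
        _ ≤ ∏ p ∈ U, p := Finset.prod_le_prod (by simp) hU
    have hlow : (n - 1) * n ^ (l - 1) ≤ ∏ p ∈ T, p := by
      by_cases hmem : n - 1 ∈ T
      · have heq : (n - 1) * ∏ p ∈ T.erase (n - 1), p = ∏ p ∈ T, p :=
          Finset.mul_prod_erase T id hmem
        have hcarde : (T.erase (n - 1)).card = l - 1 := by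
          rw [Finset.card_erase_of_mem hmem]
        have hge : ∀ p ∈ T.erase (n - 1), n ≤ p := by
          intro p hp
          obtain ⟨hne, hpT⟩ := Finset.mem_erase.mp hp
          have := (key p ((hTS p).mp hpT)).2.2
          omega
        calc (n - 1) * n ^ (l - 1) ≤ (n - 1) * ∏ p ∈ T.erase (n - 1), p := by
              apply Nat.mul_le_mul_left
              have := hstep _ hge
              rwa [hcarde] at this
          _ = ∏ p ∈ T, p := heq
      · have hge : ∀ p ∈ T, n ≤ p := by
          intro p hp
          have h1 := (key p ((hTS p).mp hp)).2.2
          have h2 : p ≠ n - 1 := fun h => hmem (h ▸ hp)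
          omega
        calc (n - 1) * n ^ (l - 1) ≤ n * n ^ (l - 1) := Nat.mul_le_mul_right _ (by omega)
          _ = n ^ l := by rw [← pow_succ']; congr 1; omega
          _ ≤ ∏ p ∈ T, p := hstep T hge
    -- move to the reals
    have hpell_le : (pell n : ℝ) ≤ a ^ (n - 1) := by
      have := pell_le_alpha (n - 1)
      rw [show n - 1 + 1 = n by omega] at this
      exact this
    have h1 : ((n : ℝ) - 1) * (n : ℝ) ^ (l - 1) ≤ a ^ (n - 1) := by
      have hnat : ((n - 1) * n ^ (l - 1) : ℕ) ≤ pell n := le_trans hlow hprodle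
      have := (Nat.cast_le (α := ℝ)).mpr hnat
      push_cast [Nat.cast_sub (show 1 ≤ n by omega)] at this
      linarith
    have hX1 : (1:ℝ) ≤ (n : ℝ) ^ (l - 1) := one_le_pow₀ (by exact_mod_cast by omega)
    have hA : (0:ℝ) < a ^ (n - 1) := by positivity
    have h32 : (3:ℝ)/2 < a := by
      have hs2 : Real.sqrt 2 ^ 2 = 2 := Real.sq_sqrt (by norm_num)
      rw [ha]; nlinarith [hs2pos]
    have hn3 : (3:ℝ) ≤ n := by exact_mod_cast hn
    have hpow : (n : ℝ) ^ l < a ^ n := by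
      have hnl : (n : ℝ) ^ l = (n : ℝ) * (n : ℝ) ^ (l - 1) := by
        rw [← pow_succ']; congr 1; omega
      have han : a ^ n = a * a ^ (n - 1) := by
        rw [← pow_succ']; congr 1; omega
      rw [hnl, han]
      nlinarith [h1, mul_nonneg (by linarith : (0:ℝ) ≤ (n:ℝ) - 3)
          (by linarith : (0:ℝ) ≤ (n:ℝ) ^ (l - 1)),
        mul_pos (by linarith : (0:ℝ) < a - 3/2) hA]
    have hlog : (l : ℝ) * Real.log n < (n : ℝ) * Real.log a := by
      have h := Real.log_lt_log (by positivity) hpow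
      rwa [Real.log_pow, Real.log_pow] at h
    rw [hcard, lt_div_iff₀ hlogn]
    exact hlog
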